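/- If G is a connected triangle-free graph with no full star-cutset and G is not a path on at most 4 vertices, then every subdivision G* of G is a connected triangle-free graph with no full star-cutset. -/

import Mathlib

/-! ## Frames and restricted frame graphs -/

/-- An axis-parallel box in `ℝ²`, i.e. a product `[x1,x2] × [y1,y2]` of two closed
nondegenerate intervals. -/
structure Box : Type where
  x1 : ℝ
  x2 : ℝ
  y1 : ℝ
  y2 : ℝ
  hx : x1 < x2
  hy : y1 < y2

namespace Box

/-- The region bounded by the frame of a box: the closed box itself. -/
def region (B : Box) : Set (ℝ × ℝ) :=
  {p : ℝ × ℝ | B.x1 ≤ p.1 ∧ p.1 ≤ B.x2 ∧ B.y1 ≤ p.2 ∧ p.2 ≤ B.y2}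

/-- The frame of a box: the topological boundary of the closed box. -/
def frame (B : Box) : Set (ℝ × ℝ) :=
  {p : ℝ × ℝ | p ∈ B.region ∧ (p.1 = B.x1 ∨ p.1 = B.x2 ∨ p.2 = B.y1 ∨ p.2 = B.y2)}

/-- The left side `{x1} × [y1,y2]` of a frame. -/
def leftSide (B : Box) : Set (ℝ × ℝ) :=
  {p : ℝ × ℝ | p.1 = B.x1 ∧ B.y1 ≤ p.2 ∧ p.2 ≤ B.y2}

/-- The right side `{x2} × [y1,y2]` of a frame. -/
def rightSide (B : Box) : Set (ℝ × ℝ) :=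
  {p : ℝ × ℝ | p.1 = B.x2 ∧ B.y1 ≤ p.2 ∧ p.2 ≤ B.y2}

/-- The top side `[x1,x2] × {y2}` of a frame. -/
def topSide (B : Box) : Set (ℝ × ℝ) :=
  {p : ℝ × ℝ | p.2 = B.y2 ∧ B.x1 ≤ p.1 ∧ p.1 ≤ B.x2}

/-- The bottom side `[x1,x2] × {y1}` of a frame. -/
def bottomSide (B : Box) : Set (ℝ × ℝ) :=
  {p : ℝ × ℝ | p.2 = B.y1 ∧ B.x1 ≤ p.1 ∧ p.1 ≤ B.x2}

/-- The four corners of a frame. -/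
def corners (B : Box) : Set (ℝ × ℝ) :=
  {(B.x1, B.y1), (B.x1, B.y2), (B.x2, B.y1), (B.x2, B.y2)}

/-- `Box.Inside inner outer` : the frame of `outer` contains the frame of `inner`,
i.e. the two frames are disjoint and the frame of `inner` is contained in the region
bounded by the frame of `outer`. -/
def Inside (inner outer : Box) : Prop :=
  inner.frame ∩ outer.frame = ∅ ∧ inner.frame ⊆ outer.region

/-- `Box.Outside B outer` : the frames are disjoint and `B` is not inside `outer`. -/
def Outside (B outer : Box) : Prop :=
  B.frame ∩ outer.frame = ∅ ∧ ¬ Inside B outer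

end Box

/-- A family of frames `(F v)` is a representation of the graph `G` as a restricted
frame graph: distinct vertices are adjacent iff their frames intersect, and the four
restrictions on the representation hold. -/
structure IsFrameRepresentation {V : Type} (G : SimpleGraph V) (F : V → Box) : Prop where
  /-- Distinct vertices are adjacent iff their frames intersect. -/
  adj_iff : ∀ u v : V, u ≠ v → (G.Adj u v ↔ ((F u).frame ∩ (F v).frame).Nonempty)
  /-- (1) Corners of a frame do not coincide with any point of another frame. -/
  corner_free : ∀ u v : V, u ≠ v → (F u).corners ∩ (F v).frame = ∅
  /-- (2) The left side of a frame does not intersect any other frame. -/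
  left_free : ∀ u v : V, u ≠ v → (F u).leftSide ∩ (F v).frame = ∅
  /-- (3) If the right side of a frame intersects a second frame, this right side
  intersects both the top and the bottom side of that second frame. -/
  right_cross : ∀ u v : V, u ≠ v →
    ((F u).rightSide ∩ (F v).frame).Nonempty →
    ((F u).rightSide ∩ (F v).topSide).Nonempty ∧
      ((F u).rightSide ∩ (F v).bottomSide).Nonempty
  /-- (4) If two frames intersect, no third frame is entirely contained in the
  intersection of the regions bounded by the two frames. -/
  not_nested : ∀ u v w : V, u ≠ v → w ≠ u → w ≠ v →
    ((F u).frame ∩ (F v).frame).Nonempty →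
    ¬ ((F w).frame ⊆ (F u).region ∩ (F v).region)

/-- A graph is a restricted frame graph if it admits a frame representation. -/
def IsRestrictedFrameGraph {V : Type} (G : SimpleGraph V) : Prop :=
  ∃ F : V → Box, IsFrameRepresentation G F

/-! ## Basic graph notions -/

/-- The closed neighborhood `N[u] = {u} ∪ N(u)`. -/
def closedNbhd {V : Type} (G : SimpleGraph V) (u : V) : Set V :=
  insert u (G.neighborSet u)

/-- `G` has a full star-cutset: for some vertex `u` the removal of `N[u]`
disconnects `G`. -/
def HasFullStarCutset {V : Type} (G : SimpleGraph V) : Prop :=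
  ∃ u : V, ¬ (G.induce ((closedNbhd G u)ᶜ)).Preconnected

/-- `v` is a cut-vertex of `G`: its removal disconnects `G`. -/
def IsCutVertex {V : Type} (G : SimpleGraph V) (v : V) : Prop :=
  ¬ (G.induce {u : V | u ≠ v}).Preconnected

/-- `G` is a path graph: its vertices can be enumerated `0, …, n-1` so that two
vertices are adjacent iff they are consecutive. -/
def IsPathGraph {V : Type} (G : SimpleGraph V) : Prop :=
  ∃ (n : ℕ) (e : V ≃ Fin n), ∀ u v : V,
    G.Adj u v ↔ ((e u : ℕ) + 1 = (e v : ℕ) ∨ (e v : ℕ) + 1 = (e u : ℕ))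

/-- `G` is a cycle graph (on at least 3 vertices). -/
def IsCycleGraphOn {V : Type} (G : SimpleGraph V) : Prop :=
  ∃ n : ℕ, 3 ≤ n ∧ ∃ e : V ≃ Fin n, ∀ u v : V,
    G.Adj u v ↔ (((e u : ℕ) + 1) % n = (e v : ℕ) ∨ ((e v : ℕ) + 1) % n = (e u : ℕ))

/-- `x` is a leaf of `T`: it has exactly one neighbor. -/
def IsLeaf {V : Type} (T : SimpleGraph V) (x : V) : Prop :=
  (T.neighborSet x).ncard = 1

/-- `G` is a chandelier with pivot `v`: `G - v` is a tree `T` and `v` is adjacent to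
exactly the leaves of `T`. -/
def IsChandelierWithPivot {V : Type} (G : SimpleGraph V) (v : V) : Prop :=
  (G.induce {u : V | u ≠ v}).IsTree ∧
    ∀ u : ↥{u : V | u ≠ v}, (G.Adj v u.val ↔ IsLeaf (G.induce {u : V | u ≠ v}) u)

/-- `G` is a chandelier. -/
def IsChandelier {V : Type} (G : SimpleGraph V) : Prop :=
  ∃ v : V, IsChandelierWithPivot G v

/-- `G` is a luxury chandelier: a chandelier (with pivot `v` and tree `T = G - v`)
such that the neighbor in `T` of each leaf of `T` has degree 2 in `T`. -/
def IsLuxuryChandelier {V : Type} (G : SimpleGraph V) : Prop :=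
  ∃ v : V, IsChandelierWithPivot G v ∧
    ∀ x y : ↥{u : V | u ≠ v}, (G.induce {u : V | u ≠ v}).Adj x y →
      IsLeaf (G.induce {u : V | u ≠ v}) x →
      ((G.induce {u : V | u ≠ v}).neighborSet y).ncard = 2

/-! ## Multigraphs and subdivisions -/

/-- A loopless multigraph on vertex set `V`: a symmetric multiplicity function. -/
structure Multigraph (V : Type) where
  m : V → V → ℕ
  symm : ∀ u v : V, m u v = m v u
  loopless : ∀ v : V, m v v = 0

/-- The multigraph associated with a simple graph (each edge has multiplicity 1). -/
noncomputable def SimpleGraph.toMultigraph {V : Type} (G : SimpleGraph V) : Multigraph V where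
  m u v := @ite ℕ (G.Adj u v) (Classical.dec _) 1 0
  symm u v := by
    beta_reduce
    by_cases h : G.Adj u v
    · rw [if_pos h, if_pos h.symm]
    · rw [if_neg h, if_neg (fun h' => h h'.symm)]
  loopless v := by
    beta_reduce
    rw [if_neg (SimpleGraph.irrefl G)]

/-- The interior (set of internal vertices) of a walk. -/
def walkInterior {V : Type} {G : SimpleGraph V} {a b : V} (p : G.Walk a b) : Set V :=
  {w : V | w ∈ p.support ∧ w ≠ a ∧ w ≠ b}

/-- A witness that the simple graph `H` is a `≥k`-subdivision of the multigraph `G`: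
each edge of `G` (counted with multiplicity) is replaced by a path with at least
`k+1` edges between (the images of) its endpoints, these paths being internally
disjoint from each other and from the branch vertices, and covering all of `H`. -/
structure MultiSubdivision {V W : Type} (G : Multigraph V) (H : SimpleGraph W) (k : ℕ) where
  /-- the embedding of branch vertices -/
  f : V ↪ W
  /-- the path replacing the `i`-th parallel edge between `u` and `v` -/
  path : ∀ u v : V, Fin (G.m u v) → H.Walk (f u) (f v)
  path_symm : ∀ (u v : V) (i : Fin (G.m u v)),
    path v u (Fin.cast (G.symm u v) i) = (path u v i).reverse
  path_ne : ∀ (u v : V) (i i' : Fin (G.m u v)), (i : ℕ) ≠ (i' : ℕ) →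
    path u v i ≠ path u v i'
  isPath : ∀ (u v : V) (i : Fin (G.m u v)), (path u v i).IsPath
  length_le : ∀ (u v : V) (i : Fin (G.m u v)), k + 1 ≤ (path u v i).length
  /-- the paths are internally disjoint from the branch vertices -/
  interior_avoid : ∀ (u v : V) (i : Fin (G.m u v)) (x : V),
    f x ∉ walkInterior (path u v i)
  /-- distinct paths are pairwise internally disjoint -/
  interior_disjoint : ∀ (u v : V) (i : Fin (G.m u v)) (u' v' : V) (i' : Fin (G.m u' v')),
    (walkInterior (path u v i) ∩ walkInterior (path u' v' i')).Nonempty →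
    (u = u' ∧ v = v' ∧ (i : ℕ) = (i' : ℕ)) ∨ (u = v' ∧ v = u' ∧ (i : ℕ) = (i' : ℕ))
  /-- every vertex of `H` is a branch vertex or an internal vertex of a path -/
  vertex_cover : ∀ w : W, (∃ x : V, f x = w) ∨
    ∃ (u v : V) (i : Fin (G.m u v)), w ∈ walkInterior (path u v i)
  /-- every edge of `H` lies on one of the paths -/
  edge_cover : ∀ e ∈ H.edgeSet, ∃ (u v : V) (i : Fin (G.m u v)), e ∈ (path u v i).edges

/-- `H` is a `≥k`-subdivision of the multigraph `G`. -/
def IsSubdivisionGE {V W : Type} (G : Multigraph V) (k : ℕ) (H : SimpleGraph W) : Prop :=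
  Nonempty (MultiSubdivision G H k)

/-- `H` is a subdivision of the simple graph `G` (every edge is replaced by a path
with at least one edge). -/
def IsSubdivision {V W : Type} (G : SimpleGraph V) (H : SimpleGraph W) : Prop :=
  IsSubdivisionGE G.toMultigraph 0 H

namespace Multigraph

/-- The underlying simple graph of a multigraph. -/
def support {V : Type} (G : Multigraph V) : SimpleGraph V where
  Adj u v := 0 < G.m u v
  symm := by
    constructor
    intro u v h
    show 0 < G.m v u
    rw [G.symm v u]
    exact h
  loopless := by
    constructor
    intro v h
    change 0 < G.m v v at h
    rw [G.loopless v] at h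
    exact Nat.lt_irrefl 0 h

/-- A multigraph is connected if its underlying simple graph is. -/
def Connected {V : Type} (G : Multigraph V) : Prop :=
  G.support.Connected

/-- A multigraph is 2-connected if it is connected, has at least two vertices, and
deleting any single vertex leaves it connected. -/
def TwoConnected {V : Type} (G : Multigraph V) : Prop :=
  G.support.Connected ∧ (∃ u v : V, u ≠ v) ∧
    ∀ v : V, (G.support.induce {u : V | u ≠ v}).Connected

/-- `v` is a feedback vertex of the multigraph `G`: `G - v` contains no cycle
(where a pair of parallel edges forms a cycle of length 2). -/
def IsFeedbackVertex {V : Type} (G : Multigraph V) (v : V) : Prop :=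
  (G.support.induce {u : V | u ≠ v}).IsAcyclic ∧
    ∀ u w : V, u ≠ v → w ≠ v → G.m u w ≤ 1

end Multigraph

/-! ## Induced cycles and big vertices -/

/-- `C` induces a cycle in `G`. -/
def IsInducedCycle {V : Type} (G : SimpleGraph V) (C : Set V) : Prop :=
  IsCycleGraphOn (G.induce C)

/-- `v` is a big vertex of the (induced cycle on) `C` with respect to the frame
representation `F`: `v ∈ C` and `F v` contains the frame of every vertex of `C`
outside `N[v]`. -/
def IsBigVertexOf {V : Type} (G : SimpleGraph V) (F : V → Box) (C : Set V) (v : V) : Prop :=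
  v ∈ C ∧ ∀ u ∈ C, u ≠ v → ¬ G.Adj v u → Box.Inside (F u) (F v)

/-- `v` is a big vertex of the representation `F`: it is a big vertex of some
induced cycle of `G`. -/
def IsBigVertex {V : Type} (G : SimpleGraph V) (F : V → Box) (v : V) : Prop :=
  ∃ C : Set V, IsInducedCycle G C ∧ IsBigVertexOf G F C v

/-! ## Gluing a chandelier onto a vertex -/

/-- The graph obtained from the disjoint union of `G₁` and `G₂` by identifying the
vertex `v` of `G₁` with the vertex `p` of `G₂`. -/
def glueAt {V₁ V₂ : Type} (G₁ : SimpleGraph V₁) (G₂ : SimpleGraph V₂) (v : V₁) (p : V₂) :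
    SimpleGraph (V₁ ⊕ {x : V₂ // x ≠ p}) :=
  SimpleGraph.fromRel (fun a b =>
    match a, b with
    | Sum.inl u, Sum.inl w => G₁.Adj u w
    | Sum.inr u, Sum.inr w => G₂.Adj u.val w.val
    | Sum.inl u, Sum.inr w => u = v ∧ G₂.Adj p w.val
    | Sum.inr _, Sum.inl _ => False)

/-! ## The multigraphs `Ĥ₁` and `Ĥ₂` -/

/-- The multiplicity matrix of `Ĥ₁` (vertices `a₁ = 0`, `b₁ = 1`, `v₁ = 2`, `v₂ = 3`,
`a₂ = 4`, `b₂ = 5`). -/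
def H1hatMatrix : Matrix (Fin 6) (Fin 6) ℕ :=
  !![0, 2, 1, 0, 0, 0;
     2, 0, 1, 0, 0, 0;
     1, 1, 0, 1, 0, 0;
     0, 0, 1, 0, 1, 1;
     0, 0, 0, 1, 0, 2;
     0, 0, 0, 1, 2, 0]

/-- The multigraph `Ĥ₁`: two disjoint digons `a₁b₁`, `a₂b₂`, and single edges
`a₁v₁`, `b₁v₁`, `v₁v₂`, `a₂v₂`, `b₂v₂`. -/
def H1hat : Multigraph (Fin 6) where
  m u v := H1hatMatrix u v
  symm := by
    intro u v
    fin_cases u <;> fin_cases v <;> rfl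
  loopless := by decide

/-- The multiplicity matrix of `Ĥ₂` (vertices `a₁ = 0`, `b₁ = 1`, `v = 2`,
`a₂ = 3`, `b₂ = 4`). -/
def H2hatMatrix : Matrix (Fin 5) (Fin 5) ℕ :=
  !![0, 2, 1, 0, 0;
     2, 0, 1, 0, 0;
     1, 1, 0, 1, 1;
     0, 0, 1, 0, 2;
     0, 0, 1, 2, 0]

/-- The multigraph `Ĥ₂`: two digons `a₁b₁`, `a₂b₂`, and single edges
`a₁v`, `b₁v`, `a₂v`, `b₂v`. -/
def H2hat : Multigraph (Fin 5) where
  m u v := H2hatMatrix u v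
  symm := by
    intro u v
    fin_cases u <;> fin_cases v <;> rfl
  loopless := by decide

/-! ## Subdivisions of `K₄` and their type -/

/-- The complete graph on four vertices. -/
def K4 : SimpleGraph (Fin 4) := ⊤

/-- The set of edges of `K₄` that are subdivided at least once in the subdivision
witnessed by `S` (i.e. replaced by a path with at least two edges). -/
def subdividedEdges {W : Type} {H : SimpleGraph W}
    (S : MultiSubdivision K4.toMultigraph H 0) : Set (Sym2 (Fin 4)) :=
  {e : Sym2 (Fin 4) | ∃ (u v : Fin 4) (i : Fin (K4.toMultigraph.m u v)),
    e = s(u, v) ∧ 2 ≤ (S.path u v i).length}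

/-! ## Adding a twin -/

/-- The graph obtained from `G` by adding a twin of `v`: a new vertex, non-adjacent
to `v`, whose neighborhood is exactly `N(v)`. -/
def addTwin {V : Type} (G : SimpleGraph V) (v : V) : SimpleGraph (V ⊕ Unit) :=
  SimpleGraph.fromRel (fun a b =>
    match a, b with
    | Sum.inl u, Sum.inl w => G.Adj u w
    | Sum.inr _, Sum.inl u => G.Adj v u
    | _, _ => False)

/-! ## The construction of Burling and Pawlik et al. -/

/-- A graph-stable set pair: a graph together with a collection of sets of vertices
(intended: stable sets). -/
structure GSPair : Type 1 where
  V : Type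
  G : SimpleGraph V
  S : Set (Set V)

namespace GSPair

/-- The vertex type of `next P`: the original vertices, the vertices `(s, u)` of the
copy `H_s` of the graph for each `s ∈ 𝒮`, and the new vertices `v_{s,t}`. -/
abbrev nextVertex (P : GSPair) : Type :=
  P.V ⊕ ((↥P.S × P.V) ⊕ (↥P.S × ↥P.S))

/-- The adjacency generator for the graph of `next P`. -/
def nextRel (P : GSPair) : P.nextVertex → P.nextVertex → Prop
  | Sum.inl u, Sum.inl v => P.G.Adj u v
  | Sum.inr (Sum.inl (s, u)), Sum.inr (Sum.inl (t, v)) => s = t ∧ P.G.Adj u v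
  | Sum.inr (Sum.inr (s, t)), Sum.inr (Sum.inl (s', v)) => s = s' ∧ v ∈ (t : Set P.V)
  | _, _ => False

/-- The procedure `next`: add a disjoint copy `H_s` of the graph for each `s ∈ 𝒮`, a
vertex `v_{s,t}` whose neighborhood is exactly the copy of `t` inside `H_s` for all
`s, t ∈ 𝒮`, and take as new collection of stable sets all `s ∪ t_s` and
`s ∪ {v_{s,t}}`. -/
def next (P : GSPair) : GSPair where
  V := P.nextVertex
  G := SimpleGraph.fromRel P.nextRel
  S := {A : Set P.nextVertex | ∃ s t : ↥P.S,
    A = (Sum.inl '' (s : Set P.V) : Set P.nextVertex) ∪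
        ((fun u : P.V => (Sum.inr (Sum.inl (s, u)) : P.nextVertex)) '' (t : Set P.V)) ∨
    A = (Sum.inl '' (s : Set P.V) : Set P.nextVertex) ∪ {Sum.inr (Sum.inr (s, t))}}

/-- The starting pair: a single vertex, with the single stable set consisting of
that vertex. -/
def base : GSPair := ⟨PUnit, ⊥, {Set.univ}⟩

/-- `P` is an induced subgraph-stable set pair of `Q`. -/
def IsInducedSubpair (P Q : GSPair) : Prop :=
  ∃ f : P.V ↪ Q.V, (∀ u v : P.V, P.G.Adj u v ↔ Q.G.Adj (f u) (f v)) ∧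
    ∀ A ∈ P.S, ∃ B ∈ Q.S, A = f ⁻¹' B

/-- A graph-stable set pair is constructible if it is an induced subgraph-stable set
pair of some iterate of `next` on the starting pair. -/
def Constructible (P : GSPair) : Prop :=
  ∃ i : ℕ, IsInducedSubpair P (next^[i] base)

end GSPair



/-! ### Auxiliary lemmas for Statement 12 -/

section Aux12

open SimpleGraph Walk

lemma isPathGraph2 {V : Type} [Fintype V] (G : SimpleGraph V) (a b : V)
    (hcov : ∀ v : V, v = a ∨ v = b) (hab : G.Adj a b) :
    IsPathGraph G ∧ Fintype.card V ≤ 4 := by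
  classical
  have dab : a ≠ b := hab.ne
  let e : V ≃ Fin 2 := {
    toFun := fun v => if v = a then ⟨0, by omega⟩ else ⟨1, by omega⟩
    invFun := ![a, b]
    left_inv := by
      intro v
      rcases hcov v with rfl | rfl
      · simp
      · simp [dab.symm]
    right_inv := by
      intro i
      fin_cases i <;> simp [dab.symm] }
  refine ⟨⟨2, e, ?_⟩, ?_⟩
  · intro u v
    rcases hcov u with rfl | rfl <;> rcases hcov v with rfl | rfl <;>
      simp [e, SimpleGraph.irrefl, hab, hab.symm, dab, dab.symm]
  · have hcc := Fintype.card_congr e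
    simp at hcc
    omega

lemma isPathGraph3 {V : Type} [Fintype V] (G : SimpleGraph V) (a b c : V)
    (hcov : ∀ v : V, v = a ∨ v = b ∨ v = c)
    (hab : G.Adj a b) (hbc : G.Adj b c) (hac : ¬ G.Adj a c) (dac : a ≠ c) :
    IsPathGraph G ∧ Fintype.card V ≤ 4 := by
  classical
  have dab : a ≠ b := hab.ne
  have dbc : b ≠ c := hbc.ne
  have hca : ¬ G.Adj c a := fun h => hac (G.adj_symm h)
  let e : V ≃ Fin 3 := {
    toFun := fun v => if v = a then ⟨0, by omega⟩ else if v = b then ⟨1, by omega⟩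
      else ⟨2, by omega⟩
    invFun := ![a, b, c]
    left_inv := by
      intro v
      rcases hcov v with rfl | rfl | rfl
      · simp
      · simp [dab.symm]
      · simp [dac.symm, dbc.symm]
    right_inv := by
      intro i
      fin_cases i <;> simp [dab.symm, dac.symm, dbc.symm] }
  refine ⟨⟨3, e, ?_⟩, ?_⟩
  · intro u v
    rcases hcov u with rfl | rfl | rfl <;> rcases hcov v with rfl | rfl | rfl <;>
      simp [e, SimpleGraph.irrefl, hab, hab.symm, hbc, hbc.symm, hac, hca,
        dab, dab.symm, dac, dac.symm, dbc, dbc.symm] <;> decide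
  · have hcc := Fintype.card_congr e
    simp at hcc
    omega

lemma isPathGraph4 {V : Type} [Fintype V] (G : SimpleGraph V) (a b c d : V)
    (hcov : ∀ v : V, v = a ∨ v = b ∨ v = c ∨ v = d)
    (hab : G.Adj a b) (hbc : G.Adj b c) (hcd : G.Adj c d)
    (hac : ¬ G.Adj a c) (had : ¬ G.Adj a d) (hbd : ¬ G.Adj b d)
    (dac : a ≠ c) (dad : a ≠ d) (dbd : b ≠ d) :
    IsPathGraph G ∧ Fintype.card V ≤ 4 := by
  classical
  have dab : a ≠ b := hab.ne
  have dbc : b ≠ c := hbc.ne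
  have dcd : c ≠ d := hcd.ne
  have hca : ¬ G.Adj c a := fun h => hac (G.adj_symm h)
  have hda : ¬ G.Adj d a := fun h => had (G.adj_symm h)
  have hdb : ¬ G.Adj d b := fun h => hbd (G.adj_symm h)
  let e : V ≃ Fin 4 := {
    toFun := fun v => if v = a then ⟨0, by omega⟩ else if v = b then ⟨1, by omega⟩
      else if v = c then ⟨2, by omega⟩ else ⟨3, by omega⟩
    invFun := ![a, b, c, d]
    left_inv := by
      intro v
      rcases hcov v with rfl | rfl | rfl | rfl
      · simp
      · simp [dab.symm]
      · simp [dac.symm, dbc.symm]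
      · simp [dad.symm, dbd.symm, dcd.symm]
    right_inv := by
      intro i
      fin_cases i <;> simp [dab.symm, dac.symm, dad.symm, dbc.symm, dbd.symm, dcd.symm] }
  refine ⟨⟨4, e, ?_⟩, ?_⟩
  · intro u v
    rcases hcov u with rfl | rfl | rfl | rfl <;> rcases hcov v with rfl | rfl | rfl | rfl <;>
      simp [e, SimpleGraph.irrefl, hab, hab.symm, hbc, hbc.symm, hcd, hcd.symm,
        hac, hca, had, hda, hbd, hdb,
        dab, dab.symm, dac, dac.symm, dad, dad.symm, dbc, dbc.symm, dbd, dbd.symm,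
        dcd, dcd.symm] <;> decide
  · have hcc := Fintype.card_congr e
    simp at hcc
    omega

section WalkLemmas

variable {V : Type*} {G : SimpleGraph V}


/-- From `a` in the support of a path `p : Walk u v`, `a ≠ u`, there is a walk from `a`
to `v` avoiding `u` and avoiding every `p`-neighbor of `u` other than `a` itself. -/
lemma seg_lemma {u v a : V} (p : G.Walk u v) (hp : p.IsPath) (ha : a ∈ p.support)
    (hau : a ≠ u) :
    ∃ q : G.Walk a v, (∀ z ∈ q.support, z ∈ p.support ∧ z ≠ u) ∧
      (∀ z, s(u, z) ∈ p.edges → z ≠ a → z ∉ q.support) := by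
  induction p with
  | nil => simp at ha; exact absurd ha hau
  | @cons u m v h r ih =>
    have hr : r.IsPath := hp.of_cons
    have hum : u ∉ r.support := by
      have h2 : ¬ u ∈ r.support ∧ r.support.Nodup := by simpa using hp.support_nodup
      exact h2.1
    rcases eq_or_ne a m with rfl | ham
    · refine ⟨r, fun z hz => ⟨by simp [hz], fun hzu => hum (hzu ▸ hz)⟩, ?_⟩
      intro z hze hza hzq
      rcases (by simpa using hze : s(u,z) = s(u,a) ∨ s(u,z) ∈ r.edges) with he | he
      · rcases Sym2.eq_iff.mp he with ⟨-, rfl⟩ | ⟨rfl, rfl⟩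
        · exact hza rfl
        · exact hau rfl
      · exact hum (r.fst_mem_support_of_mem_edges he)
    · have har : a ∈ r.support := by
        rcases (by simpa using ha) with rfl | h'
        · exact absurd rfl hau
        · exact h'
      obtain ⟨q, hq1, hq2⟩ := ih hr har ham
      refine ⟨q, fun z hz => ⟨by simp [(hq1 z hz).1], ?_⟩, ?_⟩
      · intro hzu; exact hum (hzu ▸ (hq1 z hz).1)
      · intro z hze hza hzq
        rcases (by simpa using hze : s(u,z) = s(u,m) ∨ s(u,z) ∈ r.edges) with he | he
        · rcases Sym2.eq_iff.mp he with ⟨-, rfl⟩ | ⟨rfl, rfl⟩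
          · exact (hq1 _ hzq).2 rfl
          · exact hum (hq1 _ hzq).1
        · exact hum (r.fst_mem_support_of_mem_edges he)

lemma takeUntil_dropUntil_inter [DecidableEq V] {u v w : V} {p : G.Walk u v} (hp : p.IsPath)
    (hw : w ∈ p.support) {z : V} (h1 : z ∈ (p.takeUntil w hw).support)
    (h2 : z ∈ (p.dropUntil w hw).support) : z = w := by
  by_contra hzw
  have hs := p.take_spec hw
  have hnd : p.support.Nodup := hp.support_nodup
  rw [← hs, Walk.support_append] at hnd
  have hdisj := List.disjoint_of_nodup_append hnd
  have h2' : z ∈ (p.dropUntil w hw).support.tail := by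
    have := (p.dropUntil w hw).support_eq_cons
    rw [this] at h2
    rcases List.mem_cons.mp h2 with h2 | h2
    · exact absurd h2 hzw
    · exact h2
  exact hdisj h1 h2'

/-- From a survivor `a` on a path `p` containing an interior removed vertex `w`,
reach one of the two endpoints avoiding `w` and all `p`-neighbors of `w`. -/
lemma seg2_lemma {u v w a : V} (p : G.Walk u v) (hp : p.IsPath) (hw : w ∈ p.support)
    (ha : a ∈ p.support) (haw : a ≠ w) (hae : s(w, a) ∉ p.edges) :
    ∃ e : V, (e = u ∨ e = v) ∧ ∃ q : G.Walk a e,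
      ∀ z ∈ q.support, z ∈ p.support ∧ z ≠ w ∧ s(w, z) ∉ p.edges := by
  classical
  set t := p.takeUntil w hw with ht
  set d := p.dropUntil w hw with hd
  have hs := p.take_spec hw
  have hte : t.edges ⊆ p.edges := p.edges_takeUntil_subset hw
  have hde : d.edges ⊆ p.edges := p.edges_dropUntil_subset hw
  have htsup : t.support ⊆ p.support := p.support_takeUntil_subset hw
  have hdsup : d.support ⊆ p.support := p.support_dropUntil_subset hw
  have hedge : ∀ e' ∈ p.edges, e' ∈ t.edges ∨ e' ∈ d.edges := by
    intro e' he'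
    rw [← hs, Walk.edges_append] at he'
    exact List.mem_append.mp he'
  have hasplit : a ∈ t.support ∨ a ∈ d.support := by
    rw [← hs, Walk.mem_support_append_iff] at ha
    exact ha
  rcases hasplit with hat | had
  · -- a is on the first part; go to u using the reverse of t
    have htp : t.IsPath := hp.takeUntil hw
    obtain ⟨q, hq1, hq2⟩ := seg_lemma t.reverse htp.reverse (by simpa using hat) haw
    refine ⟨u, Or.inl rfl, q, ?_⟩
    intro z hz
    have hz1 : z ∈ t.support := by
      have := (hq1 z hz).1; simpa using this
    have hzw : z ≠ w := (hq1 z hz).2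
    refine ⟨htsup hz1, hzw, ?_⟩
    intro hze
    rcases hedge _ hze with h' | h'
    · -- s(w,z) ∈ t.edges = t.reverse.edges
      have h'' : s(w, z) ∈ t.reverse.edges := by simpa using h'
      rcases eq_or_ne z a with rfl | hza
      · exact hae hze
      · exact hq2 z h'' hza hz
    · -- s(w,z) ∈ d.edges so z ∈ d.support, but z ∈ t.support too, so z = w
      have : z ∈ d.support := d.snd_mem_support_of_mem_edges h'
      exact hzw (takeUntil_dropUntil_inter hp hw hz1 this)
  · -- a is on the second part; go to v
    have hdp : d.IsPath := hp.dropUntil hw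
    obtain ⟨q, hq1, hq2⟩ := seg_lemma d hdp had haw
    refine ⟨v, Or.inr rfl, q, ?_⟩
    intro z hz
    have hz1 : z ∈ d.support := (hq1 z hz).1
    have hzw : z ≠ w := (hq1 z hz).2
    refine ⟨hdsup hz1, hzw, ?_⟩
    intro hze
    rcases hedge _ hze with h' | h'
    · have : z ∈ t.support := t.snd_mem_support_of_mem_edges h'
      exact hzw (takeUntil_dropUntil_inter hp hw this hz1)
    · rcases eq_or_ne z a with rfl | hza
      · exact hae hze
      · exact hq2 z h' hza hz

/-- A simple path cannot contain all three edges of a triangle. -/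
lemma path_no_triangle {u v : V} (p : G.Walk u v) (hp : p.IsPath) :
    ∀ a b c : V, a ≠ b → a ≠ c → b ≠ c →
      s(a, b) ∈ p.edges → s(b, c) ∈ p.edges → s(a, c) ∈ p.edges → False := by
  induction p with
  | nil => intro a b c _ _ _ h1 _ _; simp at h1
  | @cons u m v h r ih =>
    intro a b c hab hac hbc h1 h2 h3
    have hr : r.IsPath := hp.of_cons
    have hum : u ∉ r.support := by
      have h2 : ¬ u ∈ r.support ∧ r.support.Nodup := by simpa using hp.support_nodup
      exact h2.1
    have key : ∀ x y : V, s(x, y) ∈ r.edges → x ≠ u ∧ y ≠ u := by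
      intro x y hxy
      constructor
      · rintro rfl; exact hum (r.fst_mem_support_of_mem_edges hxy)
      · rintro rfl; exact hum (r.snd_mem_support_of_mem_edges hxy)
    have d13 : s(a, b) ≠ s(a, c) := by
      intro hh; rcases Sym2.eq_iff.mp hh with ⟨-, h'⟩ | ⟨h', -⟩
      · exact hbc h'
      · exact hac h'
    have d12 : s(a, b) ≠ s(b, c) := by
      intro hh; rcases Sym2.eq_iff.mp hh with ⟨h', -⟩ | ⟨h', -⟩
      · exact hab h'
      · exact hac h' 
    have d23 : s(b, c) ≠ s(a, c) := by
      intro hh; rcases Sym2.eq_iff.mp hh with ⟨h', -⟩ | ⟨h', -⟩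
      · exact hab h'.symm
      · exact hbc h' 
    simp only [Walk.edges_cons, List.mem_cons] at h1 h2 h3
    rcases h1 with h1 | h1
    · have hu : u = a ∨ u = b := by
        rcases Sym2.eq_iff.mp h1.symm with ⟨h', -⟩ | ⟨h', -⟩
        · exact Or.inl h'
        · exact Or.inr h'
      rcases hu with rfl | rfl
      · rcases h3 with h3 | h3
        · exact d13 (h1 ▸ h3.symm ▸ rfl)
        · exact (key _ _ h3).1 rfl
      · rcases h2 with h2 | h2
        · exact d12 (h1 ▸ h2.symm ▸ rfl)
        · exact (key _ _ h2).1 rfl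
    rcases h2 with h2 | h2
    · have hu : u = b ∨ u = c := by
        rcases Sym2.eq_iff.mp h2.symm with ⟨h', -⟩ | ⟨h', -⟩
        · exact Or.inl h'
        · exact Or.inr h'
      rcases hu with rfl | rfl
      · exact (key _ _ h1).2 rfl
      · rcases h3 with h3 | h3
        · exact d23 (h2 ▸ h3.symm ▸ rfl)
        · exact (key _ _ h3).2 rfl
    rcases h3 with h3 | h3
    · have hu : u = a ∨ u = c := by
        rcases Sym2.eq_iff.mp h3.symm with ⟨h', -⟩ | ⟨h', -⟩
        · exact Or.inl h'
        · exact Or.inr h'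
      rcases hu with rfl | rfl
      · exact (key _ _ h1).1 rfl
      · exact (key _ _ h2).2 rfl
    · exact ih hr a b c hab hac hbc h1 h2 h3

section RTG

/-- Reachability within a vertex set. -/
def ReachIn (G : SimpleGraph V) (s : Set V) (a b : V) : Prop :=
  Relation.ReflTransGen (fun x y => x ∈ s ∧ y ∈ s ∧ G.Adj x y) a b

lemma ReachIn.symm {s : Set V} {a b : V} (h : ReachIn G s a b) : ReachIn G s b a :=
  (@Relation.ReflTransGen.stdSymm _ _ ⟨fun _ _ ⟨h1, h2, h3⟩ => ⟨h2, h1, h3.symm⟩⟩).symm _ _ h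

lemma ReachIn.mono {s t : Set V} (hst : s ⊆ t) {a b : V} (h : ReachIn G s a b) :
    ReachIn G t a b :=
  Relation.ReflTransGen.mono (fun _ _ ⟨h1, h2, h3⟩ => ⟨hst h1, hst h2, h3⟩) _ _ h

lemma reachIn_of_walk {s : Set V} {a b : V} (p : G.Walk a b) (hsup : ∀ z ∈ p.support, z ∈ s) :
    ReachIn G s a b := by
  induction p with
  | nil => exact Relation.ReflTransGen.refl
  | @cons u m v h r ih =>
    have h1 : u ∈ s := hsup u (by simp)
    have h2 : m ∈ s := hsup m (by simp)
    exact Relation.ReflTransGen.head ⟨h1, h2, h⟩ (ih fun z hz => hsup z (by simp [hz]))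

lemma preconnected_induce_of_reachIn {s : Set V}
    (h : ∀ a ∈ s, ∀ b ∈ s, ReachIn G s a b) : (G.induce s).Preconnected := by
  rintro ⟨a, ha⟩ ⟨b, hb⟩
  have key : ∀ (b' : V) (_ : ReachIn G s a b') (hb' : b' ∈ s),
      (G.induce s).Reachable ⟨a, ha⟩ ⟨b', hb'⟩ := by
    intro b' hr
    induction hr with
    | refl => intro _; rfl
    | @tail c d hac hcd ih =>
      intro hd
      obtain ⟨hc, hd', hadj⟩ := hcd
      exact (ih hc).trans (SimpleGraph.Adj.reachable (by simpa using hadj))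
  exact key b (h a ha b hb) hb

lemma reachIn_of_preconnected_induce {s : Set V}
    (h : (G.induce s).Preconnected) : ∀ a ∈ s, ∀ b ∈ s, ReachIn G s a b := by
  intro a ha b hb
  have hr := (SimpleGraph.reachable_iff_reflTransGen _ _).mp (h ⟨a, ha⟩ ⟨b, hb⟩)
  refine Relation.ReflTransGen.lift (fun x : ↥s => (x : V)) ?_ _ _ hr
  intro x y hxy
  exact ⟨x.2, y.2, by simpa using hxy⟩

end RTG

/-- If a simple path contains the edge joining its two endpoints, it has no other
vertices. -/
lemma support_pair_of_endpoints_edge {α β : V} (r : G.Walk α β) (hr : r.IsPath)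
    (he : s(α, β) ∈ r.edges) : ∀ z ∈ r.support, z = α ∨ z = β := by
  cases r with
  | nil => simp at he
  | @cons _ m _ h rest =>
    rcases (by simpa using he : s(α, β) = s(α, m) ∨ s(α, β) ∈ rest.edges) with h1 | h1
    · rcases Sym2.eq_iff.mp h1 with ⟨-, hβ⟩ | ⟨hα, -⟩
      · subst hβ
        have hnil : rest = Walk.nil := (Walk.isPath_iff_eq_nil (p := rest)).mp hr.of_cons
        subst hnil
        intro z hz
        simpa using hz
      · exact absurd h (hα ▸ (G.loopless.irrefl α))
    · exact absurd (rest.fst_mem_support_of_mem_edges h1)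
        (by have h2 : ¬ α ∈ rest.support ∧ rest.support.Nodup := by
              simpa using hr.support_nodup
            exact h2.1)

end WalkLemmas

section GStructure

variable {V : Type} [Fintype V] {G : SimpleGraph V}

omit [Fintype V] in
lemma tfree_adj (htf : G.CliqueFree 3) {a b c : V} (h1 : G.Adj a b) (h2 : G.Adj a c)
    (h3 : G.Adj b c) : False := by
  classical
  exact htf {a, b, c} (SimpleGraph.is3Clique_triple_iff.mpr ⟨h1, h2, h3⟩)

omit [Fintype V] in
lemma mem_compl_closedNbhd_iff {x a : V} :
    a ∈ (closedNbhd G x)ᶜ ↔ a ≠ x ∧ ¬ G.Adj x a := by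
  simp [closedNbhd, not_or]

/-- Reachability within the complement of a closed neighborhood, from the
no-full-star-cutset hypothesis. -/
lemma reach_compl_closedNbhd (hnsc : ¬ HasFullStarCutset G) (x : V) :
    ∀ a ∈ (closedNbhd G x)ᶜ, ∀ b ∈ (closedNbhd G x)ᶜ,
      ReachIn G (closedNbhd G x)ᶜ a b := by
  have h : (G.induce (closedNbhd G x)ᶜ).Preconnected := by
    by_contra h
    exact hnsc ⟨x, h⟩
  exact reachIn_of_preconnected_induce h

/-- In a connected triangle-free graph with no full star-cutset that is not a path on
at most 4 vertices, every vertex with a neighbor has another neighbor. -/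
lemma no_pendant (hconn : G.Connected) (htf : G.CliqueFree 3)
    (hnsc : ¬ HasFullStarCutset G) (hnp : ¬ (IsPathGraph G ∧ Fintype.card V ≤ 4))
    {x y : V} (hxy : G.Adj x y) : ∃ z, G.Adj y z ∧ z ≠ x := by
  by_contra hcon
  push_neg at hcon
  have hyp : ∀ z, G.Adj y z → z = x := fun z hz => hcon z hz
  by_cases hxo : ∀ z, G.Adj x z → z = y
  · -- G = K2
    have hV : ∀ v : V, v = x ∨ v = y := by
      intro v
      have hr := (SimpleGraph.reachable_iff_reflTransGen _ _).mp (hconn.preconnected x v)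
      clear hxy
      induction hr with
      | refl => exact Or.inl rfl
      | @tail c d hac hcd ih =>
        rcases ih with rfl | rfl
        · exact Or.inr (hxo _ hcd)
        · exact Or.inl (hyp _ (hcd))
    exact hnp (isPathGraph2 G x y hV hxy)
  · push_neg at hxo
    obtain ⟨z, hxz, hzy⟩ := hxo
    have hzx : z ≠ x := fun h => (G.loopless.irrefl x) (h ▸ hxz)
    have hyz : ¬ G.Adj z y := by
      intro h
      exact hzx (hyp z h.symm)
    have hy_mem : y ∈ (closedNbhd G z)ᶜ :=
      mem_compl_closedNbhd_iff.mpr ⟨fun h => hzy h.symm, hyz⟩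
    -- every vertex outside N[z] equals y
    have hVz : ∀ t, t ∈ (closedNbhd G z)ᶜ → t = y := by
      intro t ht
      have hr := reach_compl_closedNbhd hnsc z y hy_mem t ht
      rcases Relation.ReflTransGen.cases_head hr with h | ⟨c, ⟨_, hc2, hc3⟩, _⟩
      · exact h.symm
      · exfalso
        have hcx := hyp c hc3
        subst hcx
        exact (mem_compl_closedNbhd_iff.mp hc2).2 hxz.symm
    have hcov : ∀ t : V, t = y ∨ t = z ∨ G.Adj z t := by
      intro t
      by_cases h1 : t = y
      · exact Or.inl h1
      · by_cases h2 : t = z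
        · exact Or.inr (Or.inl h2)
        · right; right
          by_contra h3
          exact h1 (hVz t (mem_compl_closedNbhd_iff.mpr ⟨h2, h3⟩))
    have hNx : ∀ t, G.Adj x t → t = y ∨ t = z := by
      intro t ht
      rcases hcov t with h | h | h
      · exact Or.inl h
      · exact Or.inr h
      · exact absurd ht (fun h' => tfree_adj htf hxz.symm h h')
    -- the complement of N[x] consists of z-neighbors other than x, all pendant on z
    have hNxmem : ∀ t, t ∈ (closedNbhd G x)ᶜ → (G.Adj z t ∧ t ≠ x ∧ t ≠ y ∧ t ≠ z) := by
      intro t ht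
      obtain ⟨htx, htadj⟩ := mem_compl_closedNbhd_iff.mp ht
      have hty : t ≠ y := fun h => htadj (h ▸ hxy)
      have htz : t ≠ z := fun h => htadj (h ▸ hxz)
      rcases hcov t with h | h | h
      · exact absurd h hty
      · exact absurd h htz
      · exact ⟨h, htx, hty, htz⟩
    have hsingle : ∀ a b, a ∈ (closedNbhd G x)ᶜ → b ∈ (closedNbhd G x)ᶜ → a = b := by
      intro a b ha hb
      have hr := reach_compl_closedNbhd hnsc x a ha b hb
      rcases Relation.ReflTransGen.cases_head hr with h | ⟨c, ⟨ha', hc2, hc3⟩, _⟩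
      · exact h
      · exfalso
        obtain ⟨haz, -, -, -⟩ := hNxmem a ha
        obtain ⟨hcz, -, -, hcz'⟩ := hNxmem c hc2
        exact tfree_adj htf haz hcz hc3
    by_cases h4 : ∃ t₀, G.Adj z t₀ ∧ t₀ ≠ x
    · obtain ⟨t₀, ht₀, ht₀x⟩ := h4
      have ht₀y : t₀ ≠ y := fun h => hyz (h ▸ ht₀)
      have ht₀z : t₀ ≠ z := ht₀.ne'
      have ht₀mem : t₀ ∈ (closedNbhd G x)ᶜ := by
        refine mem_compl_closedNbhd_iff.mpr ⟨ht₀x, fun h => ?_⟩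
        rcases hNx t₀ h with h' | h'
        · exact ht₀y h'
        · exact ht₀z h'
      have hcov4 : ∀ v : V, v = y ∨ v = x ∨ v = z ∨ v = t₀ := by
        intro v
        rcases hcov v with h | h | h
        · exact Or.inl h
        · exact Or.inr (Or.inr (Or.inl h))
        · by_cases hvx : v = x
          · exact Or.inr (Or.inl hvx)
          · right; right; right
            refine hsingle v t₀ ?_ ht₀mem
            refine mem_compl_closedNbhd_iff.mpr ⟨hvx, fun h' => ?_⟩
            rcases hNx v h' with h'' | h''
            · exact hyz (h'' ▸ h)
            · exact (G.loopless.irrefl z) (h'' ▸ h)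
      have hxt₀ : ¬ G.Adj x t₀ := (mem_compl_closedNbhd_iff.mp ht₀mem).2
      have hyt₀ : ¬ G.Adj y t₀ := fun h => ht₀x (hyp _ h)
      have hyz' : ¬ G.Adj y z := fun h => hyz h.symm
      exact hnp (isPathGraph4 G y x z t₀ hcov4 hxy.symm hxz ht₀ hyz' hyt₀ hxt₀
        (fun h => hzy h.symm) (fun h => ht₀y h.symm) ht₀x.symm)
    · push_neg at h4
      have hcov3 : ∀ v : V, v = y ∨ v = x ∨ v = z := by
        intro v
        rcases hcov v with h | h | h
        · exact Or.inl h
        · exact Or.inr (Or.inr h)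
        · exact Or.inr (Or.inl (h4 v h))
      have hyz' : ¬ G.Adj y z := fun h => hyz h.symm
      exact hnp (isPathGraph3 G y x z hcov3 hxy.symm hxz hyz' (fun h => hzy h.symm))

end GStructure

section GCore

variable {V : Type} [Fintype V] {G : SimpleGraph V}

lemma coreA (hconn : G.Connected) (htf : G.CliqueFree 3)
    (hnsc : ¬ HasFullStarCutset G) (hnp : ¬ (IsPathGraph G ∧ Fintype.card V ≤ 4))
    (x : V) (S : Set V) (hS : ∀ y ∈ S, G.Adj x y) :
    ∀ a b, (a ≠ x ∧ a ∉ S) → (b ≠ x ∧ b ∉ S) →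
      ReachIn G {t : V | t ≠ x ∧ t ∉ S} a b := by
  set K : Set V := {t : V | t ≠ x ∧ t ∉ S} with hK
  have hsub : (closedNbhd G x)ᶜ ⊆ K := by
    intro t ht
    obtain ⟨h1, h2⟩ := mem_compl_closedNbhd_iff.mp ht
    exact ⟨h1, fun hts => h2 (hS t hts)⟩
  have route : ∀ a, a ∈ K → ∃ a', a' ∈ (closedNbhd G x)ᶜ ∧ ReachIn G K a a' := by
    intro a ha
    by_cases hmem : a ∈ (closedNbhd G x)ᶜ
    · exact ⟨a, hmem, Relation.ReflTransGen.refl⟩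
    · have hadj : G.Adj x a := by
        have himp : ¬a = x → G.Adj x a := by simpa [closedNbhd] using hmem
        exact himp ha.1
      obtain ⟨z, haz, hzx⟩ := no_pendant hconn htf hnsc hnp hadj
      have hxz : ¬ G.Adj x z := fun h => tfree_adj htf hadj h haz
      have hz : z ∈ (closedNbhd G x)ᶜ := mem_compl_closedNbhd_iff.mpr ⟨hzx, hxz⟩
      exact ⟨z, hz, Relation.ReflTransGen.single ⟨ha, hsub hz, haz⟩⟩
  intro a b ha hb
  obtain ⟨a', ha', hra⟩ := route a ha
  obtain ⟨b', hb', hrb⟩ := route b hb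
  have hmid : ReachIn G K a' b' :=
    (reach_compl_closedNbhd hnsc x a' ha' b' hb').mono hsub
  exact (hra.trans hmid).trans hrb.symm

lemma coreB (hconn : G.Connected) (htf : G.CliqueFree 3)
    (hnsc : ¬ HasFullStarCutset G) (hnp : ¬ (IsPathGraph G ∧ Fintype.card V ≤ 4))
    {u₀ v₀ : V} (huv : G.Adj u₀ v₀) (D : Set V) (hD : D ⊆ {u₀, v₀}) :
    ∀ a b, a ∉ D → b ∉ D →
      Relation.ReflTransGen
        (fun s t => s ∉ D ∧ t ∉ D ∧ G.Adj s t ∧ s(s, t) ≠ s(u₀, v₀)) a b := by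
  set R : V → V → Prop :=
    fun s t => s ∉ D ∧ t ∉ D ∧ G.Adj s t ∧ s(s, t) ≠ s(u₀, v₀) with hR
  have hcore_mem : ∀ t, t ∈ (closedNbhd G u₀)ᶜ → t ∉ D := by
    intro t ht
    obtain ⟨h1, h2⟩ := mem_compl_closedNbhd_iff.mp ht
    intro htD
    rcases hD htD with h | h
    · exact h1 h
    · rw [h] at h2
      exact h2 huv
  have hedge : ∀ s t : V, s ≠ u₀ → t ≠ u₀ → s(s, t) ≠ s(u₀, v₀) := by
    intro s t hs ht hst
    rcases Sym2.eq_iff.mp hst with ⟨h', -⟩ | ⟨-, h'⟩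
    · exact hs h'
    · exact ht h'
  have hmono : ∀ a b, ReachIn G (closedNbhd G u₀)ᶜ a b → Relation.ReflTransGen R a b := by
    intro a b h
    refine Relation.ReflTransGen.mono ?_ _ _ h
    rintro s t ⟨h1, h2, h3⟩
    exact ⟨hcore_mem s h1, hcore_mem t h2,  h3,
      hedge s t (mem_compl_closedNbhd_iff.mp h1).1 (mem_compl_closedNbhd_iff.mp h2).1⟩
  have route : ∀ a, a ∉ D → ∃ a', a' ∈ (closedNbhd G u₀)ᶜ ∧ Relation.ReflTransGen R a a' := by
    intro a ha
    by_cases hmem : a ∈ (closedNbhd G u₀)ᶜ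
    · exact ⟨a, hmem, Relation.ReflTransGen.refl⟩
    · have himp : ¬a = u₀ → G.Adj u₀ a := by simpa [closedNbhd] using hmem
      by_cases hax : a = u₀
      · -- a = u₀ : go through a neighbor t ≠ v₀ of u₀
        have hu₀D : u₀ ∉ D := by rw [← hax]; exact ha
        have hres : ∃ a', a' ∈ (closedNbhd G u₀)ᶜ ∧ Relation.ReflTransGen R u₀ a' := by
          obtain ⟨t, hut, htv⟩ := no_pendant hconn htf hnsc hnp huv.symm
          obtain ⟨z, htz, hzu⟩ := no_pendant hconn htf hnsc hnp hut
          have hxz : ¬ G.Adj u₀ z := fun h => tfree_adj htf hut h htz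
          have hz : z ∈ (closedNbhd G u₀)ᶜ := mem_compl_closedNbhd_iff.mpr ⟨hzu, hxz⟩
          have htD : t ∉ D := by
            intro htD
            rcases hD htD with h | h
            · exact (G.loopless.irrefl u₀) (h ▸ hut)
            · exact htv h
          refine ⟨z, hz, Relation.ReflTransGen.head ⟨hu₀D, htD, hut, ?_⟩
            (Relation.ReflTransGen.single ⟨htD, hcore_mem z hz, htz, hedge t z ?_ hzu⟩)⟩
          · intro h
            rcases Sym2.eq_iff.mp h with ⟨-, h'⟩ | ⟨h', -⟩
            · exact htv h'
            · exact (G.loopless.irrefl v₀) (h' ▸ huv)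
          · exact fun h => (G.loopless.irrefl u₀) (h ▸ hut)
        rw [hax]
        exact hres
      · have hadj := himp hax
        obtain ⟨z, haz, hzu⟩ := no_pendant hconn htf hnsc hnp hadj
        have hxz : ¬ G.Adj u₀ z := fun h => tfree_adj htf hadj h haz
        have hz : z ∈ (closedNbhd G u₀)ᶜ := mem_compl_closedNbhd_iff.mpr ⟨hzu, hxz⟩
        have hau : a ≠ u₀ := fun h => (G.loopless.irrefl u₀) (h ▸ hadj)
        exact ⟨z, hz, Relation.ReflTransGen.single
          ⟨ha, hcore_mem z hz, haz, hedge a z hau hzu⟩⟩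
  intro a b ha hb
  obtain ⟨a', ha', hra⟩ := route a ha
  obtain ⟨b', hb', hrb⟩ := route b hb
  have hsymmR : Symmetric R := by
    rintro s t ⟨h1, h2, h3, h4⟩
    exact ⟨h2, h1, h3.symm, by rwa [Sym2.eq_swap]⟩
  exact (hra.trans (hmono a' b' ((reach_compl_closedNbhd hnsc u₀ a' ha' b' hb')))).trans
    ((@Relation.ReflTransGen.stdSymm _ _ ⟨fun _ _ h => hsymmR h⟩).symm _ _ hrb)

end GCore

section Subdiv

variable {V W : Type} {G : SimpleGraph V} {Gstar : SimpleGraph W}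

lemma m_pos_iff {u v : V} : 0 < G.toMultigraph.m u v ↔ G.Adj u v := by
  by_cases h : G.Adj u v <;> simp [SimpleGraph.toMultigraph, h]

lemma m_eq_one {u v : V} (h : G.Adj u v) : G.toMultigraph.m u v = 1 := by
  simp [SimpleGraph.toMultigraph, h]

/-- The canonical index of the unique path between adjacent vertices. -/
def sdIdx {u v : V} (h : G.Adj u v) : Fin (G.toMultigraph.m u v) :=
  ⟨0, m_pos_iff.mpr h⟩

lemma sdIdx_unique {u v : V} (h : G.Adj u v) (i : Fin (G.toMultigraph.m u v)) :
    i = sdIdx h := by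
  have hlt := i.isLt
  have h1 := m_eq_one (G := G) h
  exact Fin.ext (by simp only [sdIdx]; omega)

variable (S : MultiSubdivision G.toMultigraph Gstar 0)

/-- The path replacing the edge `uv`. -/
def sdP {u v : V} (h : G.Adj u v) : Gstar.Walk (S.f u) (S.f v) :=
  S.path u v (sdIdx h)

lemma sdP_isPath {u v : V} (h : G.Adj u v) : (sdP S h).IsPath := S.isPath u v _

lemma sdP_reverse {u v : V} (h : G.Adj u v) : sdP S h.symm = (sdP S h).reverse := by
  have := S.path_symm u v (sdIdx h)
  rw [show Fin.cast (G.toMultigraph.symm u v) (sdIdx h) = sdIdx h.symm from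
    sdIdx_unique h.symm _] at this
  exact this

lemma sd_path_eq_sdP {u v : V} (i : Fin (G.toMultigraph.m u v)) :
    ∃ h : G.Adj u v, S.path u v i = sdP S h := by
  have h : G.Adj u v := m_pos_iff.mp (Nat.pos_of_ne_zero (by
    intro h0
    exact absurd i.isLt (by omega)))
  exact ⟨h, by rw [sdP, sdIdx_unique h i]⟩

lemma sd_interior_not_branch {u v : V} {h : G.Adj u v} {a : W}
    (ha : a ∈ walkInterior (sdP S h)) (x : V) : S.f x ≠ a := by
  intro hfx
  exact S.interior_avoid u v (sdIdx h) x (hfx ▸ ha)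

/-- If a vertex is interior to two edge-paths, the paths coincide (up to reversal),
with identified endpoints. -/
lemma sd_interior_unique {u v u' v' : V} {h : G.Adj u v} {h' : G.Adj u' v'} {a : W}
    (ha : a ∈ walkInterior (sdP S h)) (ha' : a ∈ walkInterior (sdP S h')) :
    (u' = u ∧ v' = v) ∨ (u' = v ∧ v' = u) := by
  have := S.interior_disjoint u v (sdIdx h) u' v' (sdIdx h') ⟨a, ha, ha'⟩
  rcases this with ⟨h1, h2, -⟩ | ⟨h1, h2, -⟩
  · exact Or.inl ⟨h1.symm, h2.symm⟩
  · exact Or.inr ⟨h2.symm, h1.symm⟩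

lemma sd_interior_unique_path {u v u' v' : V} {h : G.Adj u v} {h' : G.Adj u' v'} {a : W}
    (ha : a ∈ walkInterior (sdP S h)) (ha' : a ∈ walkInterior (sdP S h')) :
    (sdP S h').edges = (sdP S h).edges ∨ (sdP S h').edges = (sdP S h).reverse.edges := by
  rcases sd_interior_unique S ha ha' with ⟨rfl, rfl⟩ | ⟨rfl, rfl⟩
  · left
    have : h' = h := Subsingleton.elim _ _
    rw [this]
  · right
    have : h' = h.symm := Subsingleton.elim _ _
    rw [this, sdP_reverse]

lemma sd_edge_on_path {e : Sym2 W} (he : e ∈ Gstar.edgeSet) :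
    ∃ (u v : V) (h : G.Adj u v), e ∈ (sdP S h).edges := by
  obtain ⟨u, v, i, hei⟩ := S.edge_cover e he
  obtain ⟨h, hp⟩ := sd_path_eq_sdP S i
  exact ⟨u, v, h, hp ▸ hei⟩

lemma sd_mem_support_cases {u v : V} {h : G.Adj u v} {a : W}
    (ha : a ∈ (sdP S h).support) :
    a = S.f u ∨ a = S.f v ∨ a ∈ walkInterior (sdP S h) := by
  by_cases h1 : a = S.f u
  · exact Or.inl h1
  · by_cases h2 : a = S.f v
    · exact Or.inr (Or.inl h2)
    · exact Or.inr (Or.inr ⟨ha, h1, h2⟩)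

lemma sd_branch_on_path {u v x : V} {h : G.Adj u v}
    (hx : S.f x ∈ (sdP S h).support) : x = u ∨ x = v := by
  rcases sd_mem_support_cases S hx with h1 | h1 | h1
  · exact Or.inl (S.f.injective h1)
  · exact Or.inr (S.f.injective h1)
  · exact absurd rfl (sd_interior_not_branch S h1 x)

/-- Adjacent branch vertices come from adjacent vertices of `G`, and the edge lies on
the corresponding path. -/
lemma sd_adj_branch {x y : V} (hadj : Gstar.Adj (S.f x) (S.f y)) :
    ∃ h : G.Adj x y, s(S.f x, S.f y) ∈ (sdP S h).edges := by
  obtain ⟨u, v, h, he⟩ := sd_edge_on_path S ((SimpleGraph.mem_edgeSet _).mpr hadj)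
  have hx := sd_branch_on_path S ((sdP S h).fst_mem_support_of_mem_edges he)
  have hy := sd_branch_on_path S ((sdP S h).snd_mem_support_of_mem_edges he)
  have hxy : x ≠ y := fun h' => hadj.ne (congrArg S.f h')
  rcases hx with rfl | rfl
  · rcases hy with rfl | rfl
    · exact absurd rfl hxy
    · exact ⟨h, he⟩
  · rcases hy with rfl | rfl
    · refine ⟨h.symm, ?_⟩
      rw [sdP_reverse S h, Walk.edges_reverse, List.mem_reverse]
      exact he
    · exact absurd rfl hxy

/-- Any neighbor of a branch vertex lies on a path out of it, with the edge on it. -/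
lemma sd_nbr_of_branch {x : V} {z : W} (hadj : Gstar.Adj (S.f x) z) :
    ∃ (y : V) (h : G.Adj x y), s(S.f x, z) ∈ (sdP S h).edges := by
  obtain ⟨u, v, h, he⟩ := sd_edge_on_path S ((SimpleGraph.mem_edgeSet _).mpr hadj)
  have hx := sd_branch_on_path S ((sdP S h).fst_mem_support_of_mem_edges he)
  rcases hx with rfl | rfl
  · exact ⟨v, h, he⟩
  · refine ⟨u, h.symm, ?_⟩
    rw [sdP_reverse S h, Walk.edges_reverse, List.mem_reverse]
    exact he

/-- Any edge at an interior vertex of the path replacing `uv` lies on that path. -/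
lemma sd_nbr_of_interior {u v : V} {h : G.Adj u v} {a z : W}
    (ha : a ∈ walkInterior (sdP S h)) (hadj : Gstar.Adj a z) :
    s(a, z) ∈ (sdP S h).edges := by
  obtain ⟨u', v', h', he⟩ := sd_edge_on_path S ((SimpleGraph.mem_edgeSet _).mpr hadj)
  have hsup : a ∈ (sdP S h').support := (sdP S h').fst_mem_support_of_mem_edges he
  have ha' : a ∈ walkInterior (sdP S h') := by
    rcases sd_mem_support_cases S hsup with h1 | h1 | h1
    · exact absurd h1.symm (sd_interior_not_branch S ha u')
    · exact absurd h1.symm (sd_interior_not_branch S ha v')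
    · exact h1
  rcases sd_interior_unique_path S ha ha' with he' | he'
  · exact he' ▸ he
  · have := he' ▸ he
    rw [Walk.edges_reverse, List.mem_reverse] at this
    exact this

lemma sd_interior_mem_reverse {u v : V} {h : G.Adj u v} {a : W} :
    a ∈ walkInterior (sdP S h.symm) ↔ a ∈ walkInterior (sdP S h) := by
  rw [sdP_reverse S h]
  constructor <;> intro ⟨h1, h2, h3⟩
  · exact ⟨by simpa [Walk.support_reverse] using h1, h3, h2⟩
  · exact ⟨by simpa [Walk.support_reverse] using h1, h3, h2⟩

end Subdiv

section SubdivMain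

variable {V W : Type} {G : SimpleGraph V} {Gstar : SimpleGraph W}
variable (S : MultiSubdivision G.toMultigraph Gstar 0)

lemma sd_eq_of_ends {u v u' v' : V} (h : G.Adj u v) (h' : G.Adj u' v')
    (hends : (u' = u ∧ v' = v) ∨ (u' = v ∧ v' = u)) :
    (sdP S h').edges = (sdP S h).edges ∨ (sdP S h').edges = (sdP S h).reverse.edges := by
  rcases hends with ⟨rfl, rfl⟩ | ⟨rfl, rfl⟩
  · left
    have : h' = h := Subsingleton.elim _ _
    rw [this]
  · right
    have : h' = h.symm := Subsingleton.elim _ _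
    rw [this, sdP_reverse]

/-- Every vertex of `Gstar` is a branch vertex or interior to some edge-path. -/
lemma sd_cover (w : W) :
    (∃ x : V, S.f x = w) ∨ ∃ (u v : V) (h : G.Adj u v), w ∈ walkInterior (sdP S h) := by
  rcases S.vertex_cover w with h | ⟨u, v, i, hw⟩
  · exact Or.inl h
  · obtain ⟨h, hp⟩ := sd_path_eq_sdP S i
    exact Or.inr ⟨u, v, h, hp ▸ hw⟩

include S in
lemma sd_connected (hconn : G.Connected) : Gstar.Connected := by
  classical
  have hbranch : ∀ x y : V, Gstar.Reachable (S.f x) (S.f y) := by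
    intro x y
    have hr := (SimpleGraph.reachable_iff_reflTransGen _ _).mp (hconn.preconnected x y)
    induction hr with
    | refl => rfl
    | @tail c d hac hcd ih => exact ih.trans ⟨sdP S hcd⟩
  have hroute : ∀ w : W, ∃ x : V, Gstar.Reachable w (S.f x) := by
    intro w
    rcases sd_cover S w with ⟨x, hx⟩ | ⟨u, v, h, hw⟩
    · exact ⟨x, hx ▸ Reachable.refl _⟩
    · exact ⟨v, ⟨(sdP S h).dropUntil w hw.1⟩⟩
  obtain ⟨v0⟩ := hconn.nonempty
  have hne : Nonempty W := ⟨S.f v0⟩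
  refine SimpleGraph.Connected.mk ?_
  intro a b
  obtain ⟨x, hx⟩ := hroute a
  obtain ⟨y, hy⟩ := hroute b
  exact (hx.trans (hbranch x y)).trans hy.symm

/-- No triangle can involve an interior vertex. -/
lemma sd_no_tri_int {a b c : W} (hab : Gstar.Adj a b) (hac : Gstar.Adj a c)
    (hbc : Gstar.Adj b c) {u v : V} {h : G.Adj u v}
    (ha : a ∈ walkInterior (sdP S h)) : False := by
  have e1 : s(a, b) ∈ (sdP S h).edges := sd_nbr_of_interior S ha hab
  have e2 : s(a, c) ∈ (sdP S h).edges := sd_nbr_of_interior S ha hac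
  have hb_sup : b ∈ (sdP S h).support := (sdP S h).snd_mem_support_of_mem_edges e1
  have hc_sup : c ∈ (sdP S h).support := (sdP S h).snd_mem_support_of_mem_edges e2
  -- get s(b,c) on (sdP S h) (possibly reversed)
  have e3 : s(b, c) ∈ (sdP S h).edges := by
    obtain ⟨u', v', h', he3⟩ := sd_edge_on_path S ((Gstar.mem_edgeSet).mpr hbc)
    have hb' : b ∈ (sdP S h').support := (sdP S h').fst_mem_support_of_mem_edges he3
    have hc' : c ∈ (sdP S h').support := (sdP S h').snd_mem_support_of_mem_edges he3
    have reduce : (sdP S h').edges = (sdP S h).edges ∨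
        (sdP S h').edges = (sdP S h).reverse.edges → s(b, c) ∈ (sdP S h).edges := by
      intro hcase
      rcases hcase with hcase | hcase
      · exact hcase ▸ he3
      · have := hcase ▸ he3
        rwa [Walk.edges_reverse, List.mem_reverse] at this
    rcases sd_mem_support_cases S hb' with hbe | hbe | hbe
    · rcases sd_mem_support_cases S hc' with hce | hce | hce
      · exact absurd (hbe ▸ hce ▸ hbc.ne) (by simp)
      · -- b = f u', c = f v' : endpoints of both paths
        apply reduce
        apply sd_eq_of_ends
        have hu' : u' = u ∨ u' = v := sd_branch_on_path S (hbe ▸ hb_sup)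
        have hv' : v' = u ∨ v' = v := sd_branch_on_path S (hce ▸ hc_sup)
        rcases hu' with rfl | rfl <;> rcases hv' with h5 | h5
        · exact absurd h5 h'.ne'
        · exact Or.inl ⟨rfl, h5.symm ▸ rfl⟩
        · exact Or.inr ⟨rfl, h5.symm ▸ rfl⟩
        · exact absurd h5 h'.ne'
      · -- c interior of both paths
        have hcint : c ∈ walkInterior (sdP S h) := by
          rcases sd_mem_support_cases S hc_sup with h1 | h1 | h1
          · exact absurd h1.symm (sd_interior_not_branch S hce u)
          · exact absurd h1.symm (sd_interior_not_branch S hce v)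
          · exact h1
        exact reduce (sd_interior_unique_path S hcint hce)
    · rcases sd_mem_support_cases S hc' with hce | hce | hce
      · -- b = f v', c = f u'
        apply reduce
        apply sd_eq_of_ends
        have hv' : v' = u ∨ v' = v := sd_branch_on_path S (hbe ▸ hb_sup)
        have hu' : u' = u ∨ u' = v := sd_branch_on_path S (hce ▸ hc_sup)
        rcases hu' with rfl | rfl <;> rcases hv' with h5 | h5
        · exact absurd h5 h'.ne'
        · exact Or.inl ⟨rfl, h5.symm ▸ rfl⟩
        · exact Or.inr ⟨rfl, h5.symm ▸ rfl⟩
        · exact absurd h5 h'.ne'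
      · exact absurd (hbe ▸ hce ▸ hbc.ne) (by simp)
      · have hcint : c ∈ walkInterior (sdP S h) := by
          rcases sd_mem_support_cases S hc_sup with h1 | h1 | h1
          · exact absurd h1.symm (sd_interior_not_branch S hce u)
          · exact absurd h1.symm (sd_interior_not_branch S hce v)
          · exact h1
        exact reduce (sd_interior_unique_path S hcint hce)
    · -- b interior of both paths
      have hbint : b ∈ walkInterior (sdP S h) := by
        rcases sd_mem_support_cases S hb_sup with h1 | h1 | h1
        · exact absurd h1.symm (sd_interior_not_branch S hbe u)
        · exact absurd h1.symm (sd_interior_not_branch S hbe v)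
        · exact h1
      exact reduce (sd_interior_unique_path S hbint hbe)
  exact path_no_triangle (sdP S h) (sdP_isPath S h) a b c hab.ne hac.ne hbc.ne e1 e3 e2

include S in
lemma sd_trianglefree (htf : G.CliqueFree 3) : Gstar.CliqueFree 3 := by
  classical
  intro t ht
  rw [SimpleGraph.is3Clique_iff] at ht
  obtain ⟨a, b, c, hab, hac, hbc, rfl⟩ := ht
  rcases sd_cover S a with ⟨x, rfl⟩ | ⟨u, v, h, haint⟩
  · rcases sd_cover S b with ⟨y, rfl⟩ | ⟨u, v, h, hbint⟩
    · rcases sd_cover S c with ⟨z, rfl⟩ | ⟨u, v, h, hcint⟩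
      · obtain ⟨h1, -⟩ := sd_adj_branch S hab
        obtain ⟨h2, -⟩ := sd_adj_branch S hac
        obtain ⟨h3, -⟩ := sd_adj_branch S hbc
        exact tfree_adj htf h1 h2 h3
      · exact sd_no_tri_int S hac.symm hbc.symm hab hcint
    · exact sd_no_tri_int S hab.symm hbc hac hbint
  · exact sd_no_tri_int S hab hac hbc haint

end SubdivMain

section CaseA

variable {V W : Type} [Fintype V] {G : SimpleGraph V} {Gstar : SimpleGraph W}
variable (S : MultiSubdivision G.toMultigraph Gstar 0)

lemma sd_int_of_support {u v : V} {h : G.Adj u v} {a : W} (ha : a ∈ (sdP S h).support)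
    (hnb : ∀ t, S.f t ≠ a) : a ∈ walkInterior (sdP S h) := by
  rcases sd_mem_support_cases S ha with h1 | h1 | h1
  · exact absurd h1.symm (hnb u)
  · exact absurd h1.symm (hnb v)
  · exact h1

include S in
lemma sd_no_cutset_branch (hconn : G.Connected) (htf : G.CliqueFree 3)
    (hnsc : ¬ HasFullStarCutset G) (hnp : ¬ (IsPathGraph G ∧ Fintype.card V ≤ 4))
    (x : V) : (Gstar.induce (closedNbhd Gstar (S.f x))ᶜ).Preconnected := by
  classical
  set s : Set W := (closedNbhd Gstar (S.f x))ᶜ with hs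
  set SS : Set V := {y : V | Gstar.Adj (S.f x) (S.f y)} with hSS
  have hmem_s : ∀ {w : W}, w ∈ s ↔ w ≠ S.f x ∧ ¬ Gstar.Adj (S.f x) w := by
    intro w
    exact mem_compl_closedNbhd_iff (G := Gstar)
  have hSS_adj : ∀ y ∈ SS, G.Adj x y := fun y hy => (sd_adj_branch S hy).choose
  have hf_surv : ∀ y : V, y ≠ x → y ∉ SS → S.f y ∈ s := by
    intro y h1 h2
    exact hmem_s.mpr ⟨fun h' => h1 (S.f.injective h'), h2⟩
  -- an interior vertex adjacent to `S.f x` forces the path to start at `x`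
  have hint_adj : ∀ {u v : V} {h : G.Adj u v} {z : W}, z ∈ walkInterior (sdP S h) →
      Gstar.Adj (S.f x) z → (x = u ∨ x = v) ∧ s(S.f x, z) ∈ (sdP S h).edges := by
    intro u v h z hzint hadj
    obtain ⟨t, h2, he⟩ := sd_nbr_of_branch S hadj
    have hzsup : z ∈ (sdP S h2).support := (sdP S h2).snd_mem_support_of_mem_edges he
    have hzint2 : z ∈ walkInterior (sdP S h2) :=
      sd_int_of_support S hzsup (fun t' => sd_interior_not_branch S hzint t')
    have hcase := sd_interior_unique S hzint hzint2
    have hedges := sd_eq_of_ends S h h2 (by tauto)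
    constructor
    · tauto
    · rcases hedges with h' | h'
      · exact h' ▸ he
      · have := h' ▸ he
        rwa [Walk.edges_reverse, List.mem_reverse] at this
  -- interior vertices of a path with both endpoints good are survivors, except
  -- possibly neighbors of f x when an endpoint is x (excluded by endpoint goodness)
  have hlift : ∀ y z : V, y ≠ x → y ∉ SS → z ≠ x → z ∉ SS → G.Adj y z →
      ReachIn Gstar s (S.f y) (S.f z) := by
    intro y z hy1 hy2 hz1 hz2 hadj
    refine reachIn_of_walk (sdP S hadj) ?_
    intro w' hw'
    rcases sd_mem_support_cases S hw' with h1 | h1 | h1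
    · exact h1 ▸ hf_surv y hy1 hy2
    · exact h1 ▸ hf_surv z hz1 hz2
    · refine hmem_s.mpr ⟨fun h' => sd_interior_not_branch S h1 x h'.symm, fun hadj' => ?_⟩
      rcases (hint_adj h1 hadj').1 with rfl | rfl
      · exact hy1 rfl
      · exact hz1 rfl
  -- anchoring
  have hanchor : ∀ a, a ∈ s → ∃ y : V, y ≠ x ∧ y ∉ SS ∧ ReachIn Gstar s a (S.f y) := by
    intro a ha
    rcases sd_cover S a with ⟨y, rfl⟩ | ⟨u, v, h, haint⟩
    · refine ⟨y, ?_, ?_, Relation.ReflTransGen.refl⟩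
      · exact fun h' => (hmem_s.mp ha).1 (h' ▸ rfl)
      · exact (hmem_s.mp ha).2
    · -- find a good endpoint
      have hW11 : ∀ {u' v' : V} (h' : G.Adj u' v'), a ∈ walkInterior (sdP S h') →
          s(S.f u', S.f v') ∈ (sdP S h').edges → False := by
        intro u' v' h' hint he
        rcases support_pair_of_endpoints_edge _ (sdP_isPath S h') he a hint.1 with h1 | h1
        · exact hint.2.1 h1
        · exact hint.2.2 h1
      have hW11' : ∀ {u' v' : V} (h' : G.Adj u' v'), a ∈ walkInterior (sdP S h') →
          u' = x → v' ∉ SS := by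
        intro u' v' h' hint hux hvSS
        obtain ⟨h2, he⟩ := sd_adj_branch S hvSS
        subst hux
        exact hW11 h' hint (Subsingleton.elim h2 h' ▸ he)
      have hgood : ∃ (u' v' : V) (h' : G.Adj u' v'),
          a ∈ walkInterior (sdP S h') ∧ v' ≠ x ∧ v' ∉ SS := by
        by_cases hv1 : v = x
        · refine ⟨v, u, h.symm, (sd_interior_mem_reverse S).mpr haint,
            fun hc => G.ne_of_adj h (hc.trans hv1.symm), ?_⟩
          exact hW11' h.symm ((sd_interior_mem_reverse S).mpr haint) hv1
        · by_cases hv2 : v ∈ SS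
          · have hu1 : u ≠ x := fun hu => (hW11' h haint hu) hv2
            exact ⟨v, u, h.symm, (sd_interior_mem_reverse S).mpr haint, hu1,
              fun huSS => tfree_adj htf (hSS_adj u huSS) (hSS_adj v hv2) h⟩
          · exact ⟨u, v, h, haint, hv1, hv2⟩
      obtain ⟨u', v', h', haint', hvx, hvSS⟩ := hgood
      refine ⟨v', hvx, hvSS, ?_⟩
      obtain ⟨q, hq1, hq2⟩ := seg_lemma (sdP S h') (sdP_isPath S h') haint'.1 haint'.2.1
      refine reachIn_of_walk q ?_
      intro z hz
      obtain ⟨hz1, hz2⟩ := hq1 z hz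
      rcases sd_mem_support_cases S hz1 with he1 | he1 | he1
      · exact absurd he1 hz2
      · exact he1 ▸ hf_surv v' hvx hvSS
      · refine hmem_s.mpr ⟨fun hc => sd_interior_not_branch S he1 x hc.symm, fun hadj' => ?_⟩
        obtain ⟨hxuv, hedge⟩ := hint_adj he1 hadj'
        have hxu : x = u' := by
          rcases hxuv with h5 | h5
          · exact h5
          · exact absurd h5.symm hvx
        have hza : z = a := by
          by_contra hza
          exact hq2 z (hxu ▸ hedge) hza hz
        subst hza
        exact (hmem_s.mp ha).2 hadj'
  -- assembly
  apply preconnected_induce_of_reachIn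
  intro a ha b hb
  obtain ⟨ya, hya1, hya2, hra⟩ := hanchor a ha
  obtain ⟨yb, hyb1, hyb2, hrb⟩ := hanchor b hb
  have hcore := coreA hconn htf hnsc hnp x SS (fun y hy => hSS_adj y hy)
    ya yb ⟨hya1, hya2⟩ ⟨hyb1, hyb2⟩
  have hliftcore : ∀ p q : V, ReachIn G {t : V | t ≠ x ∧ t ∉ SS} p q →
      ReachIn Gstar s (S.f p) (S.f q) := by
    intro p q hr
    induction hr with
    | refl => exact Relation.ReflTransGen.refl
    | @tail c d hac hcd ih =>
      exact ih.trans (hlift c d hcd.1.1 hcd.1.2 hcd.2.1.1 hcd.2.1.2 hcd.2.2)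
  exact (hra.trans (hliftcore ya yb hcore)).trans hrb.symm

end CaseA

section CaseB

variable {V W : Type} [Fintype V] {G : SimpleGraph V} {Gstar : SimpleGraph W}
variable (S : MultiSubdivision G.toMultigraph Gstar 0)

include S in
lemma sd_no_cutset_interior (hconn : G.Connected) (htf : G.CliqueFree 3)
    (hnsc : ¬ HasFullStarCutset G) (hnp : ¬ (IsPathGraph G ∧ Fintype.card V ≤ 4))
    {u₀ v₀ : V} (h₀ : G.Adj u₀ v₀) {w : W} (hw : w ∈ walkInterior (sdP S h₀)) :
    (Gstar.induce (closedNbhd Gstar w)ᶜ).Preconnected := by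
  classical
  set s : Set W := (closedNbhd Gstar w)ᶜ with hs
  have hnbr : ∀ z : W, Gstar.Adj w z ↔ s(w, z) ∈ (sdP S h₀).edges := by
    intro z
    exact ⟨fun h => sd_nbr_of_interior S hw h, fun h => (sdP S h₀).adj_of_mem_edges h⟩
  have hmem_s : ∀ {z : W}, z ∈ s ↔ z ≠ w ∧ s(w, z) ∉ (sdP S h₀).edges := by
    intro z
    rw [hs]
    rw [mem_compl_closedNbhd_iff (G := Gstar)]
    rw [hnbr z]
  set D : Set V := {y : V | S.f y ∉ s} with hD'
  have hD : D ⊆ {u₀, v₀} := by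
    intro y hy
    have : S.f y = w ∨ s(w, S.f y) ∈ (sdP S h₀).edges := by
      by_contra hcc
      push_neg at hcc
      exact hy (hmem_s.mpr hcc)
    rcases this with h1 | h1
    · exact absurd h1 (sd_interior_not_branch S hw y)
    · have := sd_branch_on_path S ((sdP S h₀).snd_mem_support_of_mem_edges h1)
      simpa using this
  have hfD : ∀ y : V, y ∉ D → S.f y ∈ s := by
    intro y hy
    by_contra hc
    exact hy hc
  -- if some vertex is interior to both a path and p₀, ends match
  have hmatch : ∀ {u' v' : V} {h' : G.Adj u' v'} {z : W}, z ∈ walkInterior (sdP S h') →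
      z ∈ walkInterior (sdP S h₀) → (u' = u₀ ∧ v' = v₀) ∨ (u' = v₀ ∧ v' = u₀) :=
    fun hz hz₀ => sd_interior_unique S hz₀ hz
  -- interior vertices of paths whose ends do not match p₀ are survivors
  have hint_surv : ∀ {u' v' : V} {h' : G.Adj u' v'},
      ¬ ((u' = u₀ ∧ v' = v₀) ∨ (u' = v₀ ∧ v' = u₀)) →
      ∀ z ∈ walkInterior (sdP S h'), z ∈ s := by
    intro u' v' h' hno z hz
    refine hmem_s.mpr ⟨?_, ?_⟩
    · intro hzw
      exact hno (hmatch hz (hzw ▸ hw))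
    · intro hedge
      have hzsup : z ∈ (sdP S h₀).support := (sdP S h₀).snd_mem_support_of_mem_edges hedge
      have hzint : z ∈ walkInterior (sdP S h₀) :=
        sd_int_of_support S hzsup (fun t => sd_interior_not_branch S hz t)
      exact hno (hmatch hz hzint)
  -- lifting good `G`-edges to reachability between branch vertices
  have hlift : ∀ y z : V, y ∉ D → z ∉ D → G.Adj y z → s(y, z) ≠ s(u₀, v₀) →
      ReachIn Gstar s (S.f y) (S.f z) := by
    intro y z hy hz hadj hne
    have hno : ¬ ((y = u₀ ∧ z = v₀) ∨ (y = v₀ ∧ z = u₀)) := by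
      intro hcase
      apply hne
      rcases hcase with ⟨rfl, rfl⟩ | ⟨rfl, rfl⟩
      · rfl
      · exact Sym2.eq_swap
    refine reachIn_of_walk (sdP S hadj) ?_
    intro w' hw'
    rcases sd_mem_support_cases S hw' with h1 | h1 | h1
    · exact h1 ▸ hfD y hy
    · exact h1 ▸ hfD z hz
    · exact hint_surv hno w' h1
  -- anchors
  have hanchor : ∀ a, a ∈ s → ∃ y : V, y ∉ D ∧ ReachIn Gstar s a (S.f y) := by
    intro a ha
    rcases sd_cover S a with ⟨y, rfl⟩ | ⟨u', v', h', haint⟩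
    · refine ⟨y, ?_, Relation.ReflTransGen.refl⟩
      intro hyD
      exact hyD ha
    · by_cases hsame : (u' = u₀ ∧ v' = v₀) ∨ (u' = v₀ ∧ v' = u₀)
      · -- a is interior to p₀ itself : use seg2
        have haint₀ : a ∈ walkInterior (sdP S h₀) := by
          rcases hsame with ⟨rfl, rfl⟩ | ⟨rfl, rfl⟩
          · rwa [show h' = h₀ from Subsingleton.elim _ _] at haint
          · rw [show h' = h₀.symm from Subsingleton.elim _ _] at haint
            exact (sd_interior_mem_reverse S).mp haint
        obtain ⟨haw, hae⟩ := hmem_s.mp ha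
        obtain ⟨e, hend, q, hq⟩ := seg2_lemma (sdP S h₀) (sdP_isPath S h₀) hw.1
          haint₀.1 haw hae
        have hsup : ∀ z ∈ q.support, z ∈ s := by
          intro z hz
          obtain ⟨hz1, hz2, hz3⟩ := hq z hz
          exact hmem_s.mpr ⟨hz2, hz3⟩
        rcases hend with rfl | rfl
        · refine ⟨u₀, ?_, reachIn_of_walk q hsup⟩
          intro hD0
          exact hD0 (hsup _ q.end_mem_support)
        · refine ⟨v₀, ?_, reachIn_of_walk q hsup⟩
          intro hD0
          exact hD0 (hsup _ q.end_mem_support)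
      · -- a is interior to another path : reach its good endpoint
        have hnotboth : ¬ (u' ∈ D ∧ v' ∈ D) := by
          rintro ⟨hu, hv⟩
          have h1 := hD hu
          have h2 := hD hv
          simp only [Set.mem_insert_iff, Set.mem_singleton_iff] at h1 h2
          rcases h1 with h1 | h1 <;> rcases h2 with h2 | h2
          · exact G.ne_of_adj h' (h1.trans h2.symm)
          · exact hsame (Or.inl ⟨h1, h2⟩)
          · exact hsame (Or.inr ⟨h1, h2⟩)
          · exact G.ne_of_adj h' (h1.trans h2.symm)
        have hgood : ∃ (u1 v1 : V) (h1 : G.Adj u1 v1), a ∈ walkInterior (sdP S h1) ∧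
            v1 ∉ D ∧ ¬ ((u1 = u₀ ∧ v1 = v₀) ∨ (u1 = v₀ ∧ v1 = u₀)) := by
          by_cases hv : v' ∈ D
          · have hu : u' ∉ D := fun hu => hnotboth ⟨hu, hv⟩
            refine ⟨v', u', h'.symm, (sd_interior_mem_reverse S).mpr haint, hu, ?_⟩
            intro hcase
            rcases hcase with ⟨rfl, rfl⟩ | ⟨rfl, rfl⟩
            · exact hsame (Or.inr ⟨rfl, rfl⟩)
            · exact hsame (Or.inl ⟨rfl, rfl⟩)
          · exact ⟨u', v', h', haint, hv, hsame⟩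
        obtain ⟨u1, v1, h1, haint1, hv1, hno1⟩ := hgood
        obtain ⟨q, hq1, -⟩ := seg_lemma (sdP S h1) (sdP_isPath S h1) haint1.1 haint1.2.1
        refine ⟨v1, hv1, reachIn_of_walk q ?_⟩
        intro z hz
        obtain ⟨hz1, hz2⟩ := hq1 z hz
        rcases sd_mem_support_cases S hz1 with he1 | he1 | he1
        · exact absurd he1 hz2
        · exact he1 ▸ hfD v1 hv1
        · exact hint_surv hno1 z he1
  -- assembly
  apply preconnected_induce_of_reachIn
  intro a ha b hb
  obtain ⟨ya, hya, hra⟩ := hanchor a ha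
  obtain ⟨yb, hyb, hrb⟩ := hanchor b hb
  have hcore := coreB hconn htf hnsc hnp h₀ D hD ya yb hya hyb
  have hliftcore : ∀ p q : V,
      Relation.ReflTransGen
        (fun y z => y ∉ D ∧ z ∉ D ∧ G.Adj y z ∧ s(y, z) ≠ s(u₀, v₀)) p q →
      ReachIn Gstar s (S.f p) (S.f q) := by
    intro p q hr
    induction hr with
    | refl => exact Relation.ReflTransGen.refl
    | @tail c d hac hcd ih =>
      exact ih.trans (hlift c d hcd.1 hcd.2.1 hcd.2.2.1 hcd.2.2.2)
  exact (hra.trans (hliftcore ya yb hcore)).trans hrb.symm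

end CaseB

end Aux12

/-- If `G` is a connected triangle-free graph with no full
star-cutset and `G` is not a path on at most 4 vertices, then every subdivision
`G*` of `G` is a connected triangle-free graph with no full star-cutset. -/
theorem subdivision_preserves_no_full_star_cutset
    {V W : Type} [Fintype V] [Fintype W] (G : SimpleGraph V) (Gstar : SimpleGraph W)
    (hconn : G.Connected) (htf : G.CliqueFree 3) (hnsc : ¬ HasFullStarCutset G)
    (hnp : ¬ (IsPathGraph G ∧ Fintype.card V ≤ 4))
    (hsub : IsSubdivision G Gstar) :
    Gstar.Connected ∧ Gstar.CliqueFree 3 ∧ ¬ HasFullStarCutset Gstar := by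
  obtain ⟨S⟩ := hsub
  refine ⟨sd_connected S hconn, sd_trianglefree S htf, ?_⟩
  rintro ⟨w, hcut⟩
  apply hcut
  rcases sd_cover S w with ⟨x, rfl⟩ | ⟨u, v, h, hint⟩
  · exact sd_no_cutset_branch S hconn htf hnsc hnp x
  · exact sd_no_cutset_interior S hconn htf hnsc hnp h hint
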